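/- arXiv:2605.06675 — 3 statements merged into one kernel-verified Lean document; each statement's English description precedes it below -/
import Mathlib

section
/- Let N ≥ 1, w positive, β > 1, and b* the reverse-waterfilling allocation for budget B. Then for all i, the weighted marginal quantity w i · β^{−b* i} is constant in i, equal to β^{−B/N} · (∏ⱼ w j)^{1/N}. -/
theorem stmt_12 (N : ℕ) (hN : 1 ≤ N) (w : Fin N → ℝ) (hw : ∀ i, 0 < w i)
    (β : ℝ) (hβ : 1 < β) (B : ℝ)
    (bstar : Fin N → ℝ)
    (hb : ∀ i, bstar i = B / N + (Real.log (w i) - (1 / N) * ∑ j, Real.log (w j)) / Real.log β) :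
    ∀ i, w i * β ^ (-(bstar i)) = β ^ (-(B / N)) * (∏ j, w j) ^ ((1 : ℝ) / N) := by
  intro i
  have hlogβ : Real.log β ≠ 0 := ne_of_gt (Real.log_pos hβ)
  have hβ0 : (0:ℝ) < β := lt_trans one_pos hβ
  have hprod : 0 < ∏ j, w j := Finset.prod_pos (fun j _ => hw j)
  rw [hb i, Real.rpow_def_of_pos hβ0, Real.rpow_def_of_pos hβ0,
    Real.rpow_def_of_pos hprod, Real.log_prod (fun j _ => (hw j).ne')]
  conv_lhs => rw [show w i = Real.exp (Real.log (w i)) from (Real.exp_log (hw i)).symm]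
  rw [← Real.exp_add, ← Real.exp_add]
  congr 1
  field_simp
  rw [Real.log_exp]
  ring
end

section
/- Let f : Fin N → ℕ → ℝ with each f i strictly decreasing and positive (marginal gains), and suppose we select R items from the multiset {f i k : i ∈ Fin N, k ≥ 1} subject to precedence (item (i,k) may be selected only if (i,1),…,(i,k−1) are selected). Then the greedy algorithm that repeatedly selects the available item of maximum value achieves the maximum total value among all feasible selections of R items. -/
lemma split_two_sum {M : Type*} [AddCommMonoid M] {N : ℕ} {i j : Fin N} (hij : i ≠ j)
    (g : Fin N → M) :
    ∑ x, g x = g i + g j + ∑ x ∈ Finset.univ \ ({i, j} : Finset (Fin N)), g x := by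
  rw [← Finset.sum_pair hij, ← Finset.compl_eq_univ_sdiff,
    Finset.sum_add_sum_compl]

/-- Selections are represented by counts `c : Fin N → ℕ`, where `c i` is the number of
items selected from chain `i` (items `(i,1),…,(i,c i)`), automatically satisfying the
precedence constraint. A greedy output is characterized by the property that every
selected item has value at least that of every still-available (next unselected) item. -/
theorem stmt_13 (N R : ℕ) (f : Fin N → ℕ → ℝ)
    (hpos : ∀ i k, 1 ≤ k → 0 < f i k)
    (hdec : ∀ i, StrictAnti (f i))
    (c : Fin N → ℕ) (hc : ∑ i, c i = R)
    (hgreedy : ∀ i j, 1 ≤ c i → f j (c j + 1) ≤ f i (c i))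
    (c' : Fin N → ℕ) (hc' : ∑ i, c' i = R) :
    ∑ i, ∑ k ∈ Finset.Icc 1 (c' i), f i k ≤ ∑ i, ∑ k ∈ Finset.Icc 1 (c i), f i k := by
  classical
  have hsum : ∑ i, c' i = ∑ i, c i := by rw [hc, hc']
  clear hc hc' hpos
  suffices H : ∀ m (d : Fin N → ℕ), ∑ i, (d i - c i) = m → ∑ i, d i = ∑ i, c i →
      ∑ i, ∑ k ∈ Finset.Icc 1 (d i), f i k ≤ ∑ i, ∑ k ∈ Finset.Icc 1 (c i), f i k from
    H _ c' rfl hsum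
  intro m
  induction m using Nat.strong_induction_on with
  | _ m IH =>
    intro d hm hs
    rcases Nat.eq_zero_or_pos m with hm0 | hmpos
    · -- d i ≤ c i everywhere, and sums equal, so d = c
      have hle : ∀ i, d i ≤ c i := by
        intro i
        have : d i - c i = 0 := by
          have := Finset.sum_eq_zero_iff.mp (hm.trans hm0) i (Finset.mem_univ i)
          exact this
        omega
      have heq : ∀ i, d i = c i := by
        intro i
        by_contra h
        have hlt : d i < c i := lt_of_le_of_ne (hle i) h
        have : ∑ x, d x < ∑ x, c x :=
          Finset.sum_lt_sum (fun x _ => hle x) ⟨i, Finset.mem_univ i, hlt⟩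
        omega
      exact le_of_eq (by simp [heq])
    · -- exchange step
      have hi : ∃ i, c i < d i := by
        by_contra h
        push_neg at h
        have : ∑ i, (d i - c i) = 0 :=
          Finset.sum_eq_zero (fun i _ => by have := h i; omega)
        omega
      obtain ⟨i, hi⟩ := hi
      have hj : ∃ j, d j < c j := by
        by_contra h
        push_neg at h
        have : ∑ x, c x < ∑ x, d x :=
          Finset.sum_lt_sum (fun x _ => h x) ⟨i, Finset.mem_univ i, hi⟩
        omega
      obtain ⟨j, hj⟩ := hj
      have hij : i ≠ j := by intro h; rw [h] at hi; omega
      set d' : Fin N → ℕ :=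
        Function.update (Function.update d i (d i - 1)) j (d j + 1) with hd'
      have hd'i : d' i = d i - 1 := by
        simp [hd', Function.update_of_ne hij, Function.update_self]
      have hd'j : d' j = d j + 1 := by simp [hd']
      have hd'x : ∀ x, x ≠ i → x ≠ j → d' x = d x := by
        intro x hxi hxj
        simp [hd', Function.update_of_ne hxj, Function.update_of_ne hxi]
      have hdi1 : 1 ≤ d i := by omega
      -- sums of d' equal sums of d
      have hsd' : ∑ x, d' x = ∑ x, d x := by
        have e1 := split_two_sum hij d'
        have e2 := split_two_sum hij d
        have e3 : ∑ x ∈ Finset.univ \ ({i, j} : Finset (Fin N)), d' x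
            = ∑ x ∈ Finset.univ \ ({i, j} : Finset (Fin N)), d x :=
          Finset.sum_congr rfl (fun x hx => by
            simp only [Finset.mem_sdiff, Finset.mem_insert, Finset.mem_singleton] at hx
            exact hd'x x (fun h => hx.2 (Or.inl h)) (fun h => hx.2 (Or.inr h)))
        rw [hd'i, hd'j] at e1
        omega
      -- measure decreases
      have hmeas : ∑ x, (d' x - c x) = m - 1 := by
        have e1 := split_two_sum hij (fun x => d' x - c x)
        have e2 := split_two_sum hij (fun x => d x - c x)
        have e3 : ∑ x ∈ Finset.univ \ ({i, j} : Finset (Fin N)), (d' x - c x)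
            = ∑ x ∈ Finset.univ \ ({i, j} : Finset (Fin N)), (d x - c x) :=
          Finset.sum_congr rfl (fun x hx => by
            simp only [Finset.mem_sdiff, Finset.mem_insert, Finset.mem_singleton] at hx
            rw [hd'x x (fun h => hx.2 (Or.inl h)) (fun h => hx.2 (Or.inr h))])
        rw [hd'i, hd'j] at e1
        omega
      -- value goes up from d to d'
      have hval : ∑ x, ∑ k ∈ Finset.Icc 1 (d x), f x k
          ≤ ∑ x, ∑ k ∈ Finset.Icc 1 (d' x), f x k := by
        rw [split_two_sum hij (fun x => ∑ k ∈ Finset.Icc 1 (d' x), f x k),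
          split_two_sum hij (fun x => ∑ k ∈ Finset.Icc 1 (d x), f x k)]
        have e3 : ∑ x ∈ Finset.univ \ ({i, j} : Finset (Fin N)),
              ∑ k ∈ Finset.Icc 1 (d' x), f x k
            = ∑ x ∈ Finset.univ \ ({i, j} : Finset (Fin N)),
              ∑ k ∈ Finset.Icc 1 (d x), f x k :=
          Finset.sum_congr rfl (fun x hx => by
            simp only [Finset.mem_sdiff, Finset.mem_insert, Finset.mem_singleton] at hx
            rw [hd'x x (fun h => hx.2 (Or.inl h)) (fun h => hx.2 (Or.inr h))])
        rw [e3]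
        apply add_le_add_left
        -- F i (d i) + F j (d j) ≤ F i (d i - 1) + F j (d j + 1)
        have hdi : d i = (d i - 1) + 1 := by omega
        have ei : ∑ k ∈ Finset.Icc 1 (d i), f i k
            = ∑ k ∈ Finset.Icc 1 (d i - 1), f i k + f i (d i) := by
          conv_lhs => rw [hdi]
          rw [Finset.sum_Icc_succ_top (by omega)]
          rw [← hdi]
        have ej : ∑ k ∈ Finset.Icc 1 (d j + 1), f j k
            = ∑ k ∈ Finset.Icc 1 (d j), f j k + f j (d j + 1) := by
          rw [Finset.sum_Icc_succ_top (by omega)]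
        rw [hd'i, hd'j, ei, ej]
        have key : f i (d i) ≤ f j (d j + 1) := by
          calc f i (d i) ≤ f i (c i + 1) := (hdec i).antitone (by omega)
            _ ≤ f j (c j) := hgreedy j i (by omega)
            _ ≤ f j (d j + 1) := (hdec j).antitone (by omega)
        linarith
      refine hval.trans (IH (m - 1) (by omega) d' hmeas (by rw [hsd']; exact hs))
end

section
/- Let β_K = β_V = β > 1 and α_K > α_V > 0, w_K = w_V = w > 0, budget b_K + b_V = B. Then the optimal continuous allocation satisfies b_K − b_V = log(α_K/α_V)/log β > 0, i.e., the component with larger distortion coefficient receives strictly more bits, and the excess is exactly log(α_K/α_V)/log β. -/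
theorem stmt_17 (w αK αV β B : ℝ)
    (hw : 0 < w) (hαV : 0 < αV) (hα : αV < αK) (hβ : 1 < β)
    (bK bV : ℝ) (hsum : bK + bV = B)
    (hopt : ∀ bK' bV' : ℝ, bK' + bV' = B →
      w * αK * β ^ (-bK) + w * αV * β ^ (-bV) ≤
        w * αK * β ^ (-bK') + w * αV * β ^ (-bV')) :
    bK - bV = Real.log (αK / αV) / Real.log β ∧ 0 < bK - bV := by
  have hβ0 : (0:ℝ) < β := lt_trans one_pos hβ
  have hαK : 0 < αK := hαV.trans hα
  have hlogβ : 0 < Real.log β := Real.log_pos hβ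
  set P : ℝ := β ^ (-B) with hPdef
  have hPpos : 0 < P := Real.rpow_pos_of_pos hβ0 _
  have hx0 : (0:ℝ) < β ^ (-bK) := Real.rpow_pos_of_pos hβ0 _
  have hy0 : (0:ℝ) < β ^ (-bV) := Real.rpow_pos_of_pos hβ0 _
  have hprod : β ^ (-bK) * β ^ (-bV) = P := by
    rw [← Real.rpow_add hβ0, hPdef]
    congr 1; linarith
  set x : ℝ := Real.sqrt (αV * P / αK) with hxdef
  have hxpos : 0 < x := Real.sqrt_pos.mpr (by positivity)
  have hxsq : x ^ 2 = αV * P / αK := Real.sq_sqrt (by positivity)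
  set b' : ℝ := -(Real.log x / Real.log β) with hb'def
  have hβb' : β ^ (-b') = x := by
    rw [hb'def, neg_neg, Real.rpow_def_of_pos hβ0, mul_comm,
      div_mul_cancel₀ _ (ne_of_gt hlogβ)]
    exact Real.exp_log hxpos
  have hβb2 : β ^ (-(B - b')) = P / x := by
    have : -(B - b') = -B + -(-b') + -(-b') + -b' := by ring
    rw [show -(B - b') = -B + b' by ring, Real.rpow_add hβ0]
    have hβb'' : β ^ b' = x⁻¹ := by
      have := hβb'
      rw [Real.rpow_neg hβ0.le] at this
      field_simp at this ⊢
      rw [this]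
    rw [hβb'', hPdef]
    field_simp
  set s : ℝ := Real.sqrt (αK * αV * P) with hsdef
  have hspos : 0 < s := Real.sqrt_pos.mpr (by positivity)
  have h1 : αK * x = s := by
    rw [hxdef, hsdef, ← Real.sqrt_sq hαK.le, ← Real.sqrt_mul (by positivity)]
    congr 1
    field_simp; ring
    rw [Real.sq_sqrt (by positivity)]
  have h2 : αV * (P / x) = s := by
    have hsx : s * x = αV * P := by
      rw [hsdef, hxdef, ← Real.sqrt_mul (by positivity)]
      rw [show αK * αV * P * (αV * P / αK) = (αV * P)^2 by field_simp]
      exact Real.sqrt_sq (by positivity)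
    field_simp
    linarith [hsx]
  have hkey := hopt b' (B - b') (by ring)
  rw [hβb', hβb2] at hkey
  -- so  αK β^(-bK) + αV β^(-bV) ≤ 2 s
  have hle : αK * β ^ (-bK) + αV * β ^ (-bV) ≤ 2 * s := by
    have h2s : w * αK * x + w * αV * (P / x) = w * (2 * s) := by
      rw [mul_assoc, mul_assoc, h1, h2]; ring
    rw [h2s] at hkey
    have := (mul_le_mul_iff_right₀ hw).mp (by linarith : w * (αK * β ^ (-bK) + αV * β ^ (-bV)) ≤ w * (2 * s))
    linarith
  -- AM-GM equality case
  have ha : (0:ℝ) ≤ αK * β ^ (-bK) := by positivity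
  have hb : (0:ℝ) ≤ αV * β ^ (-bV) := by positivity
  have hab : Real.sqrt (αK * β ^ (-bK)) * Real.sqrt (αV * β ^ (-bV)) = s := by
    rw [← Real.sqrt_mul ha, hsdef]
    congr 1
    rw [show αK * β ^ (-bK) * (αV * β ^ (-bV)) = αK * αV * (β ^ (-bK) * β ^ (-bV)) by ring, hprod]
  have hsq : (Real.sqrt (αK * β ^ (-bK)) - Real.sqrt (αV * β ^ (-bV))) ^ 2 ≤ 0 := by
    have e1 : Real.sqrt (αK * β ^ (-bK)) ^ 2 = αK * β ^ (-bK) := Real.sq_sqrt ha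
    have e2 : Real.sqrt (αV * β ^ (-bV)) ^ 2 = αV * β ^ (-bV) := Real.sq_sqrt hb
    nlinarith [hab, hle]
  have heq : Real.sqrt (αK * β ^ (-bK)) = Real.sqrt (αV * β ^ (-bV)) := by
    have h0 : (Real.sqrt (αK * β ^ (-bK)) - Real.sqrt (αV * β ^ (-bV))) ^ 2 = 0 :=
      le_antisymm hsq (sq_nonneg _)
    have := pow_eq_zero_iff (two_ne_zero) |>.mp h0
    linarith
  have hmain : αK * β ^ (-bK) = αV * β ^ (-bV) := by
    have := congrArg (· ^ 2) heq
    simpa [Real.sq_sqrt ha, Real.sq_sqrt hb] using this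
  -- take logs
  have hlog : Real.log αK + (-bK) * Real.log β = Real.log αV + (-bV) * Real.log β := by
    have h := congrArg Real.log hmain
    rw [Real.log_mul (ne_of_gt hαK) (ne_of_gt hx0),
      Real.log_mul (ne_of_gt hαV) (ne_of_gt hy0),
      Real.log_rpow hβ0, Real.log_rpow hβ0] at h
    linarith [h]
  have hdiff : bK - bV = Real.log (αK / αV) / Real.log β := by
    rw [Real.log_div (ne_of_gt hαK) (ne_of_gt hαV)]
    field_simp
    linarith [hlog]
  refine ⟨hdiff, ?_⟩
  rw [hdiff]
  apply div_pos _ hlogβ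
  rw [Real.log_div (ne_of_gt hαK) (ne_of_gt hαV)]
  have := Real.log_lt_log hαV hα
  linarith
end
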